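/- Let X, M be n×n symmetric positive definite matrices and U an n×n symmetric matrix. Then the generalized Lyapunov equation X L M + M L X = U has a unique solution L, and this solution is symmetric. -/

import Mathlib

open Matrix

lemma trace_mul_transpose_self_nonneg {n : Type*} [Fintype n] (A : Matrix n n ℝ) :
    0 ≤ trace (A * Aᵀ) := by
  rw [trace]
  refine Finset.sum_nonneg fun i _ => ?_
  simp only [diag_apply, mul_apply, transpose_apply]
  exact Finset.sum_nonneg fun j _ => mul_self_nonneg _

lemma eq_zero_of_trace_mul_transpose_self {n : Type*} [Fintype n] {A : Matrix n n ℝ}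
    (h : trace (A * Aᵀ) = 0) : A = 0 := by
  ext i j
  have h' : ∀ i ∈ Finset.univ, (0:ℝ) ≤ diag (A * Aᵀ) i := fun i _ => by
    simp only [diag_apply, mul_apply, transpose_apply]
    exact Finset.sum_nonneg fun j _ => mul_self_nonneg _
  have h1 := (Finset.sum_eq_zero_iff_of_nonneg h').mp h i (Finset.mem_univ i)
  simp only [diag_apply, mul_apply, transpose_apply] at h1
  have h2 := (Finset.sum_eq_zero_iff_of_nonneg
    (fun j _ => mul_self_nonneg (A i j))).mp h1 j (Finset.mem_univ j)
  simpa [mul_self_eq_zero] using h2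

/-- The generalized Lyapunov equation X L M + M L X = U, with X, M SPD and U symmetric,
has a unique solution, and any solution is symmetric. -/
theorem stmt1 {n : Type*} [Fintype n] [DecidableEq n]
    (X M U : Matrix n n ℝ)
    (hX : X.PosDef) (hM : M.PosDef) (hU : Uᵀ = U) :
    (∃! L : Matrix n n ℝ, X * L * M + M * L * X = U) ∧
    (∀ L : Matrix n n ℝ, X * L * M + M * L * X = U → Lᵀ = L) := by
  have hXt : Xᵀ = X := by
    rw [← conjTranspose_eq_transpose_of_trivial]; exact hX.isHermitian
  have hMt : Mᵀ = M := by
    rw [← conjTranspose_eq_transpose_of_trivial]; exact hM.isHermitian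
  open scoped MatrixOrder in
  set C := CFC.sqrt X with hC
  open scoped MatrixOrder in
  set D := CFC.sqrt M with hD
  open scoped MatrixOrder in
  have hCC : C * C = X := CFC.sqrt_mul_sqrt_self X hX.posSemidef.nonneg
  open scoped MatrixOrder in
  have hDD : D * D = M := CFC.sqrt_mul_sqrt_self M hM.posSemidef.nonneg
  have hCt : Cᵀ = C := by
    rw [← conjTranspose_eq_transpose_of_trivial]
    open scoped MatrixOrder in
    exact (Matrix.nonneg_iff_posSemidef.mp (CFC.sqrt_nonneg X)).isHermitian
  have hDt : Dᵀ = D := by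
    rw [← conjTranspose_eq_transpose_of_trivial]
    open scoped MatrixOrder in
    exact (Matrix.nonneg_iff_posSemidef.mp (CFC.sqrt_nonneg M)).isHermitian
  have hCunit : IsUnit C.det := by
    have h : C.det * C.det = X.det := by rw [← det_mul, hCC]
    refine isUnit_iff_ne_zero.mpr fun h0 => ?_
    rw [h0, mul_zero] at h
    exact (ne_of_gt hX.det_pos) h.symm
  have hDunit : IsUnit D.det := by
    have h : D.det * D.det = M.det := by rw [← det_mul, hDD]
    refine isUnit_iff_ne_zero.mpr fun h0 => ?_
    rw [h0, mul_zero] at h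
    exact (ne_of_gt hM.det_pos) h.symm
  -- injectivity of the Lyapunov operator
  have key : ∀ L : Matrix n n ℝ, X * L * M + M * L * X = 0 → L = 0 := by
    intro L hL
    have e1 : trace ((X * L * M) * Lᵀ) = trace ((C * L * D) * (C * L * D)ᵀ) := by
      rw [← hCC, ← hDD]
      simp only [transpose_mul, hCt, hDt, Matrix.mul_assoc]
      rw [trace_mul_comm]
      simp only [Matrix.mul_assoc]
    have e2 : trace ((M * L * X) * Lᵀ) = trace ((D * L * C) * (D * L * C)ᵀ) := by
      rw [← hCC, ← hDD]
      simp only [transpose_mul, hCt, hDt, Matrix.mul_assoc]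
      rw [trace_mul_comm]
      simp only [Matrix.mul_assoc]
    have htr : trace ((C * L * D) * (C * L * D)ᵀ) + trace ((D * L * C) * (D * L * C)ᵀ) = 0 := by
      rw [← e1, ← e2, ← trace_add, ← add_mul, hL, Matrix.zero_mul, trace_zero]
    have h1 : trace ((C * L * D) * (C * L * D)ᵀ) = 0 := by
      have := trace_mul_transpose_self_nonneg (C * L * D)
      have := trace_mul_transpose_self_nonneg (D * L * C)
      linarith
    have hN : C * L * D = 0 := eq_zero_of_trace_mul_transpose_self h1
    -- invert C and D
    have : C⁻¹ * (C * L * D) * D⁻¹ = 0 := by simp [hN]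
    rwa [← Matrix.mul_assoc, ← Matrix.mul_assoc, Matrix.nonsing_inv_mul C hCunit,
      Matrix.one_mul, Matrix.mul_assoc, Matrix.mul_nonsing_inv D hDunit,
      Matrix.mul_one] at this
  -- the Lyapunov operator as a linear map
  let T : Matrix n n ℝ →ₗ[ℝ] Matrix n n ℝ :=
    { toFun := fun L => X * L * M + M * L * X
      map_add' := fun L L' => by
        simp only [Matrix.mul_add, Matrix.add_mul]; abel
      map_smul' := fun c L => by
        simp only [Matrix.mul_smul, Matrix.smul_mul, smul_add, RingHom.id_apply] }
  have hTinj : Function.Injective T := by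
    rw [← LinearMap.ker_eq_bot, LinearMap.ker_eq_bot']
    intro L hL
    exact key L hL
  have hTsurj : Function.Surjective T :=
    (LinearMap.injective_iff_surjective).mp hTinj
  obtain ⟨L, hLsol⟩ := hTsurj U
  have hsymm : ∀ L : Matrix n n ℝ, X * L * M + M * L * X = U → Lᵀ = L := by
    intro L' hL'
    have htrans : X * L'ᵀ * M + M * L'ᵀ * X = U := by
      have h := congrArg transpose hL'
      rw [transpose_add, transpose_mul, transpose_mul, transpose_mul, transpose_mul,
        hXt, hMt, hU] at h
      rw [← h]; simp only [Matrix.mul_assoc]; abel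
    have : T L'ᵀ = T L' := by
      show X * L'ᵀ * M + M * L'ᵀ * X = X * L' * M + M * L' * X
      rw [htrans, hL']
    exact hTinj this
  exact ⟨⟨L, hLsol, fun L' hL' => hTinj (hL'.trans hLsol.symm)⟩, hsymm⟩
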